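/- Let f = x₁³x₃ + x₁³x₂ + x₂²x₃² and g = x₁x₃ + x₂x₃ + x₁x₂. Then for every even n and every nonnegative homogeneous polynomial t ∈ ℝ[x₁,x₂,x₃] of degree n, there exists y ∈ ℝ³ with f(y) − t(y)g(y) < 0. -/

import Mathlib

open MvPolynomial Finsupp

noncomputable section
private def sm200 : Fin 3 →₀ ℕ := single 0 2
private def sm020 : Fin 3 →₀ ℕ := single 1 2
private def sm002 : Fin 3 →₀ ℕ := single 2 2
private def sm110 : Fin 3 →₀ ℕ := single 0 1 + single 1 1
private def sm101 : Fin 3 →₀ ℕ := single 0 1 + single 2 1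
private def sm011 : Fin 3 →₀ ℕ := single 1 1 + single 2 1

private lemma stmt14_scale {n : ℕ} {t : MvPolynomial (Fin 3) ℝ} (ht : t.IsHomogeneous n)
    (r : ℝ) (y : Fin 3 → ℝ) :
    eval (fun i => r * y i) t = r ^ n * eval y t := by
  rw [eval_eq', eval_eq', Finset.mul_sum]
  apply Finset.sum_congr rfl
  intro d hd
  rw [MvPolynomial.mem_support_iff] at hd
  have h2 := ht hd
  have hsum : ∑ i : Fin 3, d i = n := by
    rw [← h2, Finsupp.weight_apply, Finsupp.sum_fintype] <;> simp
  calc MvPolynomial.coeff d t * ∏ i, (r * y i) ^ d i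
      = coeff d t * ((∏ i, r ^ d i) * ∏ i, y i ^ d i) := by
        rw [← Finset.prod_mul_distrib]; simp [mul_pow]
    _ = r ^ n * (coeff d t * ∏ i, y i ^ d i) := by
        rw [Finset.prod_pow_eq_pow_sum, hsum]; ring

private lemma stmt14_quad {t : MvPolynomial (Fin 3) ℝ} (ht : t.IsHomogeneous 2) :
    ∃ a b c d e f : ℝ, ∀ y : Fin 3 → ℝ,
      eval y t = a * y 0 ^ 2 + b * y 1 ^ 2 + c * y 2 ^ 2
        + d * (y 0 * y 1) + e * (y 0 * y 2) + f * (y 1 * y 2) := by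
  refine ⟨coeff sm200 t, coeff sm020 t, coeff sm002 t, coeff sm110 t, coeff sm101 t,
    coeff sm011 t, fun y => ?_⟩
  have hsub : t.support ⊆ {sm200, sm020, sm002, sm110, sm101, sm011} := by
    intro d hd
    rw [MvPolynomial.mem_support_iff] at hd
    have h2 := ht hd
    have hsum : d 0 + d 1 + d 2 = 2 := by
      have : ∑ i : Fin 3, d i = 2 := by
        rw [← h2, Finsupp.weight_apply, Finsupp.sum_fintype] <;> simp
      simpa [Fin.sum_univ_three] using this
    have hcase : (d 0 = 2 ∧ d 1 = 0 ∧ d 2 = 0) ∨ (d 0 = 0 ∧ d 1 = 2 ∧ d 2 = 0)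
        ∨ (d 0 = 0 ∧ d 1 = 0 ∧ d 2 = 2) ∨ (d 0 = 1 ∧ d 1 = 1 ∧ d 2 = 0)
        ∨ (d 0 = 1 ∧ d 1 = 0 ∧ d 2 = 1) ∨ (d 0 = 0 ∧ d 1 = 1 ∧ d 2 = 1) := by omega
    simp only [Finset.mem_insert, Finset.mem_singleton]
    obtain h|h|h|h|h|h := hcase
    · exact Or.inl (by ext i; fin_cases i <;>
        simp [sm200, Finsupp.single_apply, h.1, h.2.1, h.2.2])
    · exact Or.inr (Or.inl (by ext i; fin_cases i <;>
        simp [sm020, Finsupp.single_apply, h.1, h.2.1, h.2.2]))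
    · exact Or.inr (Or.inr (Or.inl (by ext i; fin_cases i <;>
        simp [sm002, Finsupp.single_apply, h.1, h.2.1, h.2.2])))
    · exact Or.inr (Or.inr (Or.inr (Or.inl (by ext i; fin_cases i <;>
        simp [sm110, Finsupp.single_apply, h.1, h.2.1, h.2.2]))))
    · exact Or.inr (Or.inr (Or.inr (Or.inr (Or.inl (by ext i; fin_cases i <;>
        simp [sm101, Finsupp.single_apply, h.1, h.2.1, h.2.2])))))
    · exact Or.inr (Or.inr (Or.inr (Or.inr (Or.inr (by ext i; fin_cases i <;>
        simp [sm011, Finsupp.single_apply, h.1, h.2.1, h.2.2])))))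
  have h1 : sm200 ∉ ({sm020, sm002, sm110, sm101, sm011} : Finset (Fin 3 →₀ ℕ)) := by
    simp only [Finset.mem_insert, Finset.mem_singleton]
    rintro (h|h|h|h|h) <;>
      simpa [sm200, sm020, sm002, sm110, sm101, sm011, Finsupp.single_apply] using
        DFunLike.congr_fun h 0
  have h2 : sm020 ∉ ({sm002, sm110, sm101, sm011} : Finset (Fin 3 →₀ ℕ)) := by
    simp only [Finset.mem_insert, Finset.mem_singleton]
    rintro (h|h|h|h) <;>
      simpa [sm020, sm002, sm110, sm101, sm011, Finsupp.single_apply] using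
        DFunLike.congr_fun h 1
  have h3 : sm002 ∉ ({sm110, sm101, sm011} : Finset (Fin 3 →₀ ℕ)) := by
    simp only [Finset.mem_insert, Finset.mem_singleton]
    rintro (h|h|h) <;>
      simpa [sm002, sm110, sm101, sm011, Finsupp.single_apply] using DFunLike.congr_fun h 2
  have h4 : sm110 ∉ ({sm101, sm011} : Finset (Fin 3 →₀ ℕ)) := by
    simp only [Finset.mem_insert, Finset.mem_singleton]
    rintro (h|h) <;>
      simpa [sm110, sm101, sm011, Finsupp.single_apply] using DFunLike.congr_fun h 2
  have h5 : sm101 ∉ ({sm011} : Finset (Fin 3 →₀ ℕ)) := by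
    simp only [Finset.mem_singleton]
    intro h
    simpa [sm101, sm011, Finsupp.single_apply] using DFunLike.congr_fun h 0
  rw [eval_eq', Finset.sum_subset hsub (fun x _ hx => by
    simp [MvPolynomial.notMem_support_iff.mp hx])]
  rw [Finset.sum_insert h1, Finset.sum_insert h2, Finset.sum_insert h3, Finset.sum_insert h4,
    Finset.sum_insert h5, Finset.sum_singleton]
  simp only [Fin.prod_univ_three, sm200, sm020, sm002, sm110, sm101, sm011, Finsupp.add_apply,
    Finsupp.single_apply]
  norm_num [Fin.ext_iff]
  ring

theorem stmt_14 (n : ℕ) (hn : Even n) (t : MvPolynomial (Fin 3) ℝ)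
    (ht : t.IsHomogeneous n) (htnn : ∀ y : Fin 3 → ℝ, 0 ≤ eval y t) :
    ∃ y : Fin 3 → ℝ,
      (y 0) ^ 3 * y 2 + (y 0) ^ 3 * y 1 + (y 1) ^ 2 * (y 2) ^ 2
        - eval y t * (y 0 * y 2 + y 1 * y 2 + y 0 * y 1) < 0 := by
  by_cases h2 : n = 2
  · subst h2
    obtain ⟨a, b, c, d, e, f, heval⟩ := stmt14_quad ht
    have ha : 0 ≤ a := by have h := htnn ![1, 0, 0]; rw [heval] at h; norm_num [Matrix.cons_val_two] at h; exact h
    have hb : 0 ≤ b := by have h := htnn ![0, 1, 0]; rw [heval] at h; norm_num [Matrix.cons_val_two] at h; exact h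
    have hcn : 0 ≤ c := by have h := htnn ![0, 0, 1]; rw [heval] at h; norm_num [Matrix.cons_val_two] at h; exact h
    rcases lt_or_eq_of_le hcn with hc | hc
    · -- c > 0 : take y = (ε, 0, 1)
      set K : ℝ := a + |e| + 1 with hK
      have hKpos : 0 < K := by positivity
      set ε : ℝ := c / (c + K) with hεdef
      have hden : 0 < c + K := by linarith
      have hε0 : 0 < ε := div_pos hc hden
      have hε1 : ε < 1 := by rw [hεdef, div_lt_one hden]; linarith
      have hεc : ε * (c + K) = c := by rw [hεdef]; field_simp
      refine ⟨![ε, 0, 1], ?_⟩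
      rw [heval]
      norm_num [Matrix.cons_val_two]
      -- goal should reduce to a polynomial inequality in ε
      nlinarith [le_abs_self e, neg_abs_le e, abs_nonneg e, mul_pos hε0 hc,
        mul_pos hε0 hε0, sq_nonneg ε, mul_nonneg ha (mul_pos hε0 hε0).le,
        mul_pos (mul_pos hε0 hε0) hc, mul_lt_mul_of_pos_left hε1 hε0]
    · -- c = 0
      have hc0 : c = 0 := hc.symm
      have he : e = 0 := by
        have h := htnn ![-e, 0, a + 1]
        rw [heval] at h
        norm_num [Matrix.cons_val_two, hc0] at h
        have : e ^ 2 = 0 := by nlinarith [sq_nonneg e, h]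
        exact pow_eq_zero_iff (by norm_num) |>.mp this
      have hf : f = 0 := by
        by_contra hf
        have h := htnn ![0, 1, -(b + 1) / f]
        rw [heval] at h
        norm_num [Matrix.cons_val_two, hc0] at h
        have hfe : f * ((-1 + -b) / f) = -1 - b := by field_simp; ring
        nlinarith [h, hfe]
      rcases lt_or_eq_of_le hb with hbpos | hbz
      · -- b > 0 : take y = (0, 1, b/2)
        refine ⟨![0, 1, b / 2], ?_⟩
        rw [heval]
        norm_num [Matrix.cons_val_two, hc0, hf]
        nlinarith [hbpos]
      · -- b = 0
        have hb0 : b = 0 := hbz.symm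
        have hd : d = 0 := by
          have h := htnn ![-d, a + 1, 0]
          rw [heval] at h
          norm_num [Matrix.cons_val_two, hc0, hb0] at h
          have : d ^ 2 = 0 := by nlinarith [sq_nonneg d, h]
          exact pow_eq_zero_iff (by norm_num) |>.mp this
        rcases le_or_gt 1 a with hage | halt
        · -- a ≥ 1 : take y = (1, 1, 1/2)
          refine ⟨![1, 1, 1 / 2], ?_⟩
          rw [heval]
          norm_num [Matrix.cons_val_two, hc0, hb0, hd, he, hf]
          nlinarith [hage]
        · -- a < 1 : take y = (1, a - 1, a - 1)
          refine ⟨![1, a - 1, a - 1], ?_⟩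
          rw [heval]
          norm_num [Matrix.cons_val_two, hc0, hb0, hd, he, hf]
          have hu : 0 < (a - 1) ^ 2 := by nlinarith [halt]
          have h1 : (a - 1) ^ 2 ≤ 1 := by nlinarith
          nlinarith [hu, h1, ha, mul_le_mul_of_nonneg_left h1 (sq_nonneg (a - 1)),
            mul_nonneg (sq_nonneg (a - 1)) ha]
  · -- n = 0 or n ≥ 4
    have hcases : n = 0 ∨ 4 ≤ n := by
      obtain ⟨k, hk⟩ := hn; omega
    set c : ℝ := eval ![1, -1, 0] t with hcdef
    have hc0 : 0 ≤ c := htnn _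
    rcases hcases with h0 | h4
    · subst h0
      set ε : ℝ := Real.sqrt (c + 1) with hεdef
      have hε2 : ε ^ 2 = c + 1 := Real.sq_sqrt (by linarith)
      refine ⟨fun i => ε * (![1, -1, 0]) i, ?_⟩
      rw [stmt14_scale ht]
      norm_num [Matrix.cons_val_two]
      nlinarith [hε2, hc0]
    · set ε : ℝ := 1 / (c + 1) with hεdef
      have hden : (0:ℝ) < c + 1 := by linarith
      have hε0 : 0 < ε := by positivity
      have hε1 : ε ≤ 1 := by rw [hεdef]; rw [div_le_one hden]; linarith
      have hεc : ε * (c + 1) = 1 := by rw [hεdef]; field_simp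
      have hpow : ε ^ (n - 2) ≤ ε := by
        calc ε ^ (n - 2) ≤ ε ^ 1 := pow_le_pow_of_le_one hε0.le hε1 (by omega)
          _ = ε := pow_one ε
      have hsplit : ε ^ n = ε ^ (n - 2) * ε ^ 2 := by
        rw [← pow_add]; congr 1; omega
      have key : c * ε ^ n * ε ^ 2 < ε ^ 4 := by
        have h1 : c * ε ^ (n - 2) ≤ c * ε := mul_le_mul_of_nonneg_left hpow hc0
        have h2 : c * ε < 1 := by nlinarith
        calc c * ε ^ n * ε ^ 2 = (c * ε ^ (n - 2)) * ε ^ 4 := by rw [hsplit]; ring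
          _ ≤ (c * ε) * ε ^ 4 := by nlinarith [pow_pos hε0 4]
          _ < 1 * ε ^ 4 := by nlinarith [pow_pos hε0 4]
          _ = ε ^ 4 := one_mul _
      refine ⟨fun i => ε * (![1, -1, 0]) i, ?_⟩
      rw [stmt14_scale ht]
      norm_num [Matrix.cons_val_two]
      nlinarith [key]
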